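/- For the action of τ on the affine root lattice V of type Ã_{n−1}: τ(α_1) = α_0 + α_{n−1}, τ(α_i) = α_{i−1} for 2 ≤ i ≤ n−2, and τ(α_0 + α_{n−1}) = α_{n−2}; in other words, (α_{n−1}+α_0, α_{n−2}, α_{n−3}, …, α_1) is a cycle of order n−1 for τ. Consequently κ = τ^{n−1} fixes each of the roots α_1, …, α_{n−2} and α_0 + α_{n−1}. -/

import Mathlib

/-! Statement 14: for the action of `τ` on the affine root lattice of type `Ã_{n-1}`:
`τ(α_1) = α_0 + α_{n-1}`, `τ(α_i) = α_{i-1}` for `2 ≤ i ≤ n-2`, and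
`τ(α_0 + α_{n-1}) = α_{n-2}`; so `(α_{n-1}+α_0, α_{n-2}, …, α_1)` is a cycle of order
`n-1` for `τ`.  Consequently `κ = τ^{n-1}` fixes each of `α_1, …, α_{n-2}` and
`α_0 + α_{n-1}`. -/

/-- The affine root lattice `V = ℤ × (Fin n → ℤ)` of type `Ã_{n-1}`; the first
coordinate records the coefficient of the basic imaginary root `δ`. -/
abbrev V (n : ℕ) : Type := ℤ × (Fin n → ℤ)

/-- The basic imaginary root `δ = (1, 0)`. -/
def deltaV (n : ℕ) : V n := (1, 0)

/-- The index preceding `i` cyclically (i.e. `i - 1 mod n`). -/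
def prevIdx {n : ℕ} (i : Fin n) : Fin n := ⟨((i : ℕ) + (n - 1)) % n, Nat.mod_lt _ i.pos⟩

/-- The simple roots, indexed `0`-based by `Fin n`: writing `f_0, …, f_{n-1}` for the
standard basis of `Fin n → ℤ` (so `e_k = f_{k-1}` in the paper's `1`-based notation),
`alphaV i = α_i = (0, e_i − e_{i+1}) = (0, f_{i-1} − f_i)` for `1 ≤ i ≤ n-1`, and
`alphaV 0 = α_0 = (1, e_n − e_1) = (1, f_{n-1} − f_0)`. -/
def alphaV {n : ℕ} (i : Fin n) : V n :=
  (if (i : ℕ) = 0 then 1 else 0, Pi.single (prevIdx i) 1 - Pi.single i 1)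

/-- The pairing of `x ∈ V` with the coroot `α_i^∨`:
`⟨(r,v), α_i^∨⟩ = v_i − v_{i+1}` for `1 ≤ i ≤ n-1` and `⟨(r,v), α_0^∨⟩ = v_n − v_1`
(in the paper's `1`-based notation). -/
def coroot {n : ℕ} (i : Fin n) (x : V n) : ℤ := x.2 (prevIdx i) - x.2 i

/-- The reflection `s_i : V → V`, `s_i(x) = x − ⟨x, α_i^∨⟩·α_i`. -/
def sV {n : ℕ} (i : Fin n) (x : V n) : V n := x - coroot i x • alphaV i

/-- `τ = s_{n-1}∘s_{n-2}∘⋯∘s_1∘s_0` acting on `V` (the `foldl` applies `s_0` first). -/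
def tauV (n : ℕ) : V n → V n := fun x => (List.finRange n).foldl (fun y i => sV i y) x

/-- `κ = τ^{n-1}` acting on `V`. -/
def kappaV (n : ℕ) : V n → V n := (tauV n)^[n - 1]

variable {n : ℕ}

lemma prevIdx_coe (hn : 2 ≤ n) (i : Fin n) :
    (prevIdx i : ℕ) = if (i : ℕ) = 0 then n - 1 else (i : ℕ) - 1 := by
  simp only [prevIdx]
  split
  · next h => rw [h]; simp
  · next h =>
    have h2 : (i : ℕ) + (n - 1) = ((i : ℕ) - 1) + n := by omega
    rw [h2, Nat.add_mod_right]
    exact Nat.mod_eq_of_lt (by omega)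

lemma sV_fst (i : Fin n) (x : V n) :
    (sV i x).1 = x.1 - (x.2 (prevIdx i) - x.2 i) * (if (i : ℕ) = 0 then 1 else 0) := by
  simp [sV, coroot, alphaV, mul_comm]

lemma sV_snd (hn : 2 ≤ n) (i : Fin n) (x : V n) (j : Fin n) :
    (sV i x).2 j = if (j : ℕ) = (prevIdx i : ℕ) then x.2 i
      else if (j : ℕ) = (i : ℕ) then x.2 (prevIdx i) else x.2 j := by
  have hpi : (prevIdx i : ℕ) ≠ (i : ℕ) := by
    have := prevIdx_coe hn i
    split at this <;> omega
  simp only [sV, coroot, alphaV, Prod.snd_sub, Pi.sub_apply, Prod.smul_snd, Pi.smul_apply,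
    smul_eq_mul, Pi.single_apply]
  by_cases h1 : (j : ℕ) = (prevIdx i : ℕ)
  · have hj : j = prevIdx i := Fin.ext h1
    subst hj
    rw [if_pos h1]
    simp [Fin.ext_iff, hpi, Ne.symm hpi]
  · rw [if_neg h1]
    by_cases h2 : (j : ℕ) = (i : ℕ)
    · have hj : j = i := Fin.ext h2
      subst hj
      rw [if_pos h2]
      simp [Fin.ext_iff, hpi, Ne.symm hpi]
    · rw [if_neg h2]
      have hj1 : j ≠ prevIdx i := fun h => h1 (congrArg Fin.val h)
      have hj2 : j ≠ i := fun h => h2 (congrArg Fin.val h)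
      simp [hj1, hj2]
lemma prevIdx_zero (hn : 2 ≤ n) : prevIdx (⟨0, by omega⟩ : Fin n) = ⟨n - 1, by omega⟩ := by
  apply Fin.ext; rw [prevIdx_coe hn]; simp

lemma prevIdx_pos (hn : 2 ≤ n) (m : ℕ) (h0 : m ≠ 0) (hm : m < n) :
    prevIdx (⟨m, hm⟩ : Fin n) = ⟨m - 1, by omega⟩ := by
  apply Fin.ext; rw [prevIdx_coe hn]; simp [h0]

lemma foldl_take (hn : 3 ≤ n) (r : ℤ) (v : Fin n → ℤ) (k : ℕ) (hk1 : 1 ≤ k) (hk : k ≤ n - 1) :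
    ((List.finRange n).take k).foldl (fun y i => sV i y) (r, v)
    = (r + v ⟨0, by have := hn; omega⟩ - v ⟨n - 1, by have := hn; omega⟩,
       fun (j : Fin n) => if hj : (j : ℕ) = n - 1 then v ⟨0, by have := hn; omega⟩
         else if (j : ℕ) + 1 < k then v ⟨(j : ℕ) + 1, by have := j.2; omega⟩
         else if (j : ℕ) + 1 = k then v ⟨n - 1, by have := hn; omega⟩
         else v j) := by
  induction k with
  | zero => omega
  | succ k ih =>
    rw [List.take_succ]
    have hkn : k < n := by omega
    have hget : (List.finRange n)[k]? = some ⟨k, hkn⟩ := by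
      rw [List.getElem?_eq_getElem (by simpa using hkn)]; simp
    rw [hget]
    simp only [Option.toList_some, List.foldl_append, List.foldl_cons, List.foldl_nil]
    rcases Nat.eq_or_lt_of_le hk1 with h1 | h1
    · -- k = 0
      have hk0 : k = 0 := by omega
      subst hk0
      simp only [List.take_zero, List.foldl_nil]
      refine Prod.ext ?_ (funext fun j => ?_)
      · rw [sV_fst, prevIdx_zero (by omega)]
        simp; ring
      · rw [sV_snd (by omega), prevIdx_zero (by omega)]
        beta_reduce
        simp only [Fin.val_mk]
        have hj2 := j.2
        split_ifs
        all_goals first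
          | rfl
          | exact congrArg v (Fin.ext (by simp only [Fin.val_mk]; omega))
          | (exfalso; omega)
    · -- k ≥ 1
      have hk1' : 1 ≤ k := by omega
      rw [ih hk1' (by omega)]
      refine Prod.ext ?_ (funext fun j => ?_)
      · rw [sV_fst, prevIdx_pos (by omega) k (by omega) hkn]
        beta_reduce
        simp only [Fin.val_mk]
        rw [if_neg (show ¬ ((⟨k, hkn⟩ : Fin n) : ℕ) = 0 by simp only [Fin.val_mk]; omega)]
        ring
      · rw [sV_snd (by omega), prevIdx_pos (by omega) k (by omega) hkn]
        beta_reduce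
        simp only [Fin.val_mk]
        have hj2 := j.2
        split_ifs
        all_goals first
          | rfl
          | exact congrArg v (Fin.ext (by simp only [Fin.val_mk]; omega))
          | (exfalso; omega)
lemma tauV_eq (hn : 3 ≤ n) (r : ℤ) (v : Fin n → ℤ) :
    tauV n (r, v) = (r + v ⟨0, by have := hn; omega⟩ - v ⟨n - 1, by have := hn; omega⟩,
      fun (j : Fin n) => if hj : (j : ℕ) = n - 1 then v j
        else if (j : ℕ) = n - 2 then v ⟨0, by have := hn; omega⟩
        else v ⟨(j : ℕ) + 1, by have := j.2; omega⟩) := by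
  have hlen : (List.finRange n).take n = List.finRange n := by
    apply List.take_of_length_le; simp
  have hn1 : n = (n - 1) + 1 := by omega
  have hkn : n - 1 < n := by omega
  have hget : (List.finRange n)[n - 1]? = some ⟨n - 1, hkn⟩ := by
    rw [List.getElem?_eq_getElem (by simpa using hkn)]; simp
  have hsplit : List.finRange n
      = (List.finRange n).take (n - 1) ++ [(⟨n - 1, hkn⟩ : Fin n)] := by
    calc List.finRange n = (List.finRange n).take n := hlen.symm
      _ = (List.finRange n).take ((n - 1) + 1) := by rw [← hn1]
      _ = (List.finRange n).take (n - 1) ++ [(⟨n - 1, hkn⟩ : Fin n)] := by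
          rw [List.take_succ, hget]; rfl
  show (List.finRange n).foldl (fun y i => sV i y) (r, v) = _
  rw [hsplit, List.foldl_append, List.foldl_cons, List.foldl_nil,
    foldl_take hn r v (n - 1) (by omega) le_rfl]
  refine Prod.ext ?_ (funext fun j => ?_)
  · rw [sV_fst, prevIdx_pos (by omega) (n - 1) (by omega) hkn]
    beta_reduce
    rw [if_neg (show ¬ ((⟨n - 1, hkn⟩ : Fin n) : ℕ) = 0 by simp only [Fin.val_mk]; omega)]
    ring
  · rw [sV_snd (by omega), prevIdx_pos (by omega) (n - 1) (by omega) hkn]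
    beta_reduce
    simp only [Fin.val_mk]
    have hj2 := j.2
    split_ifs
    all_goals (try rfl)
    all_goals (try exact congrArg v (Fin.ext (by simp only [Fin.val_mk]; omega)))
    all_goals (exfalso; omega)

lemma alphaV_pos (hn : 2 ≤ n) (m : ℕ) (h0 : m ≠ 0) (hm : m < n) :
    alphaV (⟨m, hm⟩ : Fin n)
      = (0, fun (j : Fin n) => if (j : ℕ) = m - 1 then 1 else if (j : ℕ) = m then -1 else 0) := by
  rw [alphaV, prevIdx_pos hn m h0 hm]
  refine Prod.ext ?_ (funext fun j => ?_)
  · simp only [Fin.val_mk]; rw [if_neg h0]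
  · simp only [Pi.sub_apply, Pi.single_apply, Fin.ext_iff, Fin.val_mk]
    split_ifs <;> omega

lemma BV_eq (hn : 3 ≤ n) :
    alphaV (⟨0, by have := hn; omega⟩ : Fin n) + alphaV (⟨n - 1, by have := hn; omega⟩ : Fin n)
      = (1, fun (j : Fin n) => if (j : ℕ) = n - 2 then 1 else if (j : ℕ) = 0 then -1 else 0) := by
  rw [alphaV, alphaV, prevIdx_zero (by omega), prevIdx_pos (by omega) (n - 1) (by omega) (by omega)]
  refine Prod.ext ?_ (funext fun j => ?_)
  · simp only [Prod.fst_add, Fin.val_mk]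
    rw [if_neg (show ¬ (n - 1 = 0) by omega)]
    norm_num
  · simp only [Prod.snd_add, Pi.add_apply, Pi.sub_apply, Pi.single_apply, Fin.ext_iff, Fin.val_mk]
    have hj2 := j.2
    split_ifs <;> omega
lemma tau1 (hn : 3 ≤ n) :
    tauV n (alphaV (⟨1, by have := hn; omega⟩ : Fin n))
      = alphaV (⟨0, by have := hn; omega⟩ : Fin n) + alphaV (⟨n - 1, by have := hn; omega⟩ : Fin n) := by
  rw [alphaV_pos (by omega) 1 one_ne_zero (by omega), tauV_eq hn, BV_eq hn]
  refine Prod.ext ?_ (funext fun j => ?_)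
  · beta_reduce; simp only [Fin.val_mk]; split_ifs <;> first | omega | exact ‹False›.elim
  · beta_reduce; simp only [Fin.val_mk]; have := j.2; split_ifs <;> first | omega | exact ‹False›.elim

lemma tau2 (hn : 3 ≤ n) (i : ℕ) (h2 : 2 ≤ i) (hi : i ≤ n - 2) :
    tauV n (alphaV (⟨i, by have := hn; omega⟩ : Fin n)) = alphaV (⟨i - 1, by have := hn; omega⟩ : Fin n) := by
  rw [alphaV_pos (by omega) i (by omega) (by omega), tauV_eq hn,
      alphaV_pos (by omega) (i - 1) (by omega) (by omega)]
  refine Prod.ext ?_ (funext fun j => ?_)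
  · beta_reduce; simp only [Fin.val_mk]; split_ifs <;> first | omega | exact ‹False›.elim
  · beta_reduce; simp only [Fin.val_mk]; have := j.2; split_ifs <;> first | omega | exact ‹False›.elim

lemma tau3 (hn : 3 ≤ n) :
    tauV n (alphaV (⟨0, by have := hn; omega⟩ : Fin n) + alphaV (⟨n - 1, by have := hn; omega⟩ : Fin n))
      = alphaV (⟨n - 2, by have := hn; omega⟩ : Fin n) := by
  rw [BV_eq hn, tauV_eq hn, alphaV_pos (by omega) (n - 2) (by omega) (by omega)]
  refine Prod.ext ?_ (funext fun j => ?_)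
  · beta_reduce; simp only [Fin.val_mk]; split_ifs <;> first | omega | exact ‹False›.elim
  · beta_reduce; simp only [Fin.val_mk]; have := j.2; split_ifs <;> first | omega | exact ‹False›.elim
/-- The cycle `(α_0+α_{n-1}, α_{n-2}, …, α_1)` extended periodically. -/
def cyc (n : ℕ) (hn : 3 ≤ n) (j : ℕ) : V n :=
  if j % (n - 1) = 0 then alphaV ⟨0, by have := hn; omega⟩ + alphaV ⟨n - 1, by have := hn; omega⟩
  else alphaV ⟨j % (n - 1), by have := Nat.mod_lt j (show 0 < n - 1 by omega); omega⟩

lemma cyc_eq_B (hn : 3 ≤ n) (j : ℕ) (h : j % (n - 1) = 0) :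
    cyc n hn j = alphaV (⟨0, by have := hn; omega⟩ : Fin n) + alphaV (⟨n - 1, by have := hn; omega⟩ : Fin n) := by
  unfold cyc; rw [if_pos h]

lemma cyc_eq_alpha (hn : 3 ≤ n) (j m : ℕ) (h : j % (n - 1) = m) (h0 : m ≠ 0) (hm : m < n) :
    cyc n hn j = alphaV (⟨m, hm⟩ : Fin n) := by
  unfold cyc; rw [if_neg (by omega)]
  exact congrArg alphaV (Fin.ext (by simp only [Fin.val_mk]; exact h))

lemma cyc_congr (hn : 3 ≤ n) {j j' : ℕ} (h : j % (n - 1) = j' % (n - 1)) :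
    cyc n hn j = cyc n hn j' := by
  have hlt := Nat.mod_lt j' (show 0 < n - 1 by omega)
  by_cases h0 : j' % (n - 1) = 0
  · rw [cyc_eq_B hn j (by omega), cyc_eq_B hn j' h0]
  · rw [cyc_eq_alpha hn j (j' % (n - 1)) h h0 (by omega),
        cyc_eq_alpha hn j' (j' % (n - 1)) rfl h0 (by omega)]

lemma cyc_step (hn : 3 ≤ n) (j : ℕ) : tauV n (cyc n hn (j + 1)) = cyc n hn j := by
  have hm : (j + 1) % (n - 1) = (j % (n - 1) + 1) % (n - 1) := by
    conv_lhs => rw [Nat.add_mod]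
    rw [Nat.mod_eq_of_lt (show 1 < n - 1 by omega)]
  have hlt : j % (n - 1) < n - 1 := Nat.mod_lt _ (by omega)
  by_cases h0 : j % (n - 1) = n - 2
  · have h1 : (j + 1) % (n - 1) = 0 := by
      rw [hm, h0, show n - 2 + 1 = n - 1 from by omega, Nat.mod_self]
    rw [cyc_eq_B hn (j + 1) h1, cyc_eq_alpha hn j (n - 2) h0 (by omega) (by omega)]
    exact tau3 hn
  · by_cases h2 : j % (n - 1) = 0
    · have h1 : (j + 1) % (n - 1) = 1 := by
        rw [hm, h2]; exact Nat.mod_eq_of_lt (by omega)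
      rw [cyc_eq_alpha hn (j + 1) 1 h1 one_ne_zero (by omega), cyc_eq_B hn j h2]
      exact tau1 hn
    · have h1 : (j + 1) % (n - 1) = j % (n - 1) + 1 := by
        rw [hm]; exact Nat.mod_eq_of_lt (by omega)
      rw [cyc_eq_alpha hn (j + 1) (j % (n - 1) + 1) h1 (by omega) (by omega),
          cyc_eq_alpha hn j (j % (n - 1)) rfl h2 (by omega)]
      have ht := tau2 hn (j % (n - 1) + 1) (by omega) (by omega)
      rw [ht]
      exact congrArg alphaV (Fin.ext (by simp only [Fin.val_mk]; omega))

lemma cyc_iter (hn : 3 ≤ n) : ∀ (k j : ℕ), (tauV n)^[k] (cyc n hn (j + k)) = cyc n hn j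
  | 0, j => rfl
  | k + 1, j => by
      rw [Function.iterate_succ_apply, show j + (k + 1) = (j + k) + 1 from rfl,
        cyc_step hn (j + k), cyc_iter hn k j]

lemma kappa_cyc (hn : 3 ≤ n) (j : ℕ) : kappaV n (cyc n hn j) = cyc n hn j := by
  have hper : cyc n hn j = cyc n hn (j + (n - 1)) :=
    cyc_congr hn (by rw [Nat.add_mod_right])
  show (tauV n)^[n - 1] _ = _
  conv_lhs => rw [hper]
  exact cyc_iter hn (n - 1) j
/-- `τ(α_1) = α_0 + α_{n-1}`; `τ(α_i) = α_{i-1}` for `2 ≤ i ≤ n-2`;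
`τ(α_0 + α_{n-1}) = α_{n-2}`; and `κ = τ^{n-1}` fixes `α_1, …, α_{n-2}` and
`α_0 + α_{n-1}`. -/
theorem stmt14 {n : ℕ} (hn : 3 ≤ n) :
    tauV n (alphaV (⟨1, by omega⟩ : Fin n))
        = alphaV (⟨0, by omega⟩ : Fin n) + alphaV (⟨n - 1, by omega⟩ : Fin n) ∧
      (∀ i : ℕ, ∀ _ : 2 ≤ i, ∀ _ : i ≤ n - 2,
        tauV n (alphaV (⟨i, by omega⟩ : Fin n)) = alphaV (⟨i - 1, by omega⟩ : Fin n)) ∧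
      tauV n (alphaV (⟨0, by omega⟩ : Fin n) + alphaV (⟨n - 1, by omega⟩ : Fin n))
        = alphaV (⟨n - 2, by omega⟩ : Fin n) ∧
      (∀ i : ℕ, ∀ _ : 1 ≤ i, ∀ _ : i ≤ n - 2,
        kappaV n (alphaV (⟨i, by omega⟩ : Fin n)) = alphaV (⟨i, by omega⟩ : Fin n)) ∧
      kappaV n (alphaV (⟨0, by omega⟩ : Fin n) + alphaV (⟨n - 1, by omega⟩ : Fin n))
        = alphaV (⟨0, by omega⟩ : Fin n) + alphaV (⟨n - 1, by omega⟩ : Fin n) := by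
  refine ⟨tau1 hn, fun i h2 hi => tau2 hn i h2 hi, tau3 hn, fun i h1 hi => ?_, ?_⟩
  · have h := kappa_cyc hn i
    rwa [cyc_eq_alpha hn i i (Nat.mod_eq_of_lt (by omega)) (by omega) (by omega)] at h
  · have h := kappa_cyc hn 0
    rwa [cyc_eq_B hn 0 (by simp)] at h
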